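/- Let (u_ε)_{ε>0} be a family in ℂ^N with T(u_ε) Hermitian PSD and uniformly bounded, and let u_0 be a cluster point as ε → 0⁺. If for every ε the columns of a fixed matrix Y ∈ ℂ^{N×L} lie in the range of T(u_ε) and tr(Y^H T(u_ε)^† Y) is uniformly bounded, then the columns of Y lie in the range of T(u_0). -/

import Mathlib

open Matrix Filter Topology ComplexOrder

/-- The Hermitian Toeplitz matrix whose first row is the transpose of `u`. -/
def Toep (N : ℕ) (u : Fin N → ℂ) : Matrix (Fin N) (Fin N) ℂ :=
  Matrix.of fun j k =>
    if (j : ℕ) ≤ (k : ℕ) then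
      u ⟨(k : ℕ) - (j : ℕ), lt_of_le_of_lt (Nat.sub_le _ _) k.isLt⟩
    else
      (starRingEnd ℂ) (u ⟨(j : ℕ) - (k : ℕ), lt_of_le_of_lt (Nat.sub_le _ _) j.isLt⟩)

/-- `tr(Yᴴ T† Y)` for PSD `T`, with `†` the Moore–Penrose (restriction-to-range)
inverse, realized as the supremum of the regularized quadratic forms. -/
noncomputable def qtrace (N L : ℕ) (T : Matrix (Fin N) (Fin N) ℂ)
    (Y : Matrix (Fin N) (Fin L) ℂ) : ℝ :=
  sSup { t : ℝ | ∃ δ : ℝ, 0 < δ ∧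
    t = (Yᴴ * (T + δ • (1 : Matrix (Fin N) (Fin N) ℂ))⁻¹ * Y).trace.re }

section Aux

variable {N : ℕ}

/-- Real part of a PSD quadratic form is nonnegative. -/
lemma re_nonneg_of_psd {M : Matrix (Fin N) (Fin N) ℂ} (hM : M.PosSemidef)
    (x : Fin N → ℂ) : 0 ≤ (star x ⬝ᵥ (M *ᵥ x)).re := by
  have h := hM.dotProduct_mulVec_nonneg x
  simpa using (Complex.le_def.mp h).1

/-- Cauchy–Schwarz for a PSD sesquilinear form. -/
lemma psd_cs {M : Matrix (Fin N) (Fin N) ℂ} (hM : M.PosSemidef) (a b : Fin N → ℂ) :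
    ‖star a ⬝ᵥ (M *ᵥ b)‖ ^ 2 ≤ (star a ⬝ᵥ (M *ᵥ a)).re * (star b ⬝ᵥ (M *ᵥ b)).re := by
  obtain ⟨B, rfl⟩ : ∃ B : Matrix (Fin N) (Fin N) ℂ, M = Bᴴ * B := by
    open scoped MatrixOrder Matrix.Norms.L2Operator in
    exact CStarAlgebra.nonneg_iff_eq_star_mul_self.mp hM.nonneg
  have key : ∀ x z : Fin N → ℂ,
      star x ⬝ᵥ ((Bᴴ * B) *ᵥ z) = star (B *ᵥ x) ⬝ᵥ (B *ᵥ z) := by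
    intro x z
    rw [← Matrix.mulVec_mulVec, Matrix.dotProduct_mulVec, Matrix.star_mulVec]
  rw [key, key, key]
  have h := inner_mul_inner_self_le (𝕜 := ℂ)
      ((WithLp.equiv 2 (Fin N → ℂ)).symm (B *ᵥ a)) ((WithLp.equiv 2 (Fin N → ℂ)).symm (B *ᵥ b))
  rw [← norm_inner_symm ((WithLp.equiv 2 (Fin N → ℂ)).symm (B *ᵥ a))] at h
  simp only [WithLp.equiv_symm_apply, EuclideanSpace.inner_toLp_toLp, dotProduct_comm _ (star _),
    RCLike.re_to_complex] at h
  rw [pow_two]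
  exact h

/-- The regularized matrix is positive definite. -/
lemma posDef_reg {T : Matrix (Fin N) (Fin N) ℂ} (hT : T.PosSemidef) {δ : ℝ} (hδ : 0 < δ) :
    (T + δ • (1 : Matrix (Fin N) (Fin N) ℂ)).PosDef := by
  have h1 : δ • (1 : Matrix (Fin N) (Fin N) ℂ) = Matrix.diagonal (fun _ => (δ : ℂ)) := by
    rw [← Matrix.smul_one_eq_diagonal]
    ext i j
    simp [Matrix.smul_apply, Complex.real_smul]
  rw [h1]
  exact Matrix.PosDef.posSemidef_add hT (Matrix.PosDef.diagonal fun _ => Complex.zero_lt_real.mpr hδ)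

lemma smul_one_mulVec (δ : ℝ) (s : Fin N → ℂ) :
    (δ • (1 : Matrix (Fin N) (Fin N) ℂ)) *ᵥ s = (δ : ℂ) • s := by
  have h1 : δ • (1 : Matrix (Fin N) (Fin N) ℂ) = (δ : ℂ) • (1 : Matrix (Fin N) (Fin N) ℂ) := by
    ext i j
    simp [Matrix.smul_apply, Complex.real_smul]
  rw [h1, Matrix.smul_mulVec, Matrix.one_mulVec]

lemma A_mulVec_inv {T : Matrix (Fin N) (Fin N) ℂ} (hT : T.PosSemidef) {δ : ℝ} (hδ : 0 < δ)
    (y : Fin N → ℂ) :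
    (T + δ • (1 : Matrix (Fin N) (Fin N) ℂ)) *ᵥ
      ((T + δ • (1 : Matrix (Fin N) (Fin N) ℂ))⁻¹ *ᵥ y) = y := by
  have hA := posDef_reg hT hδ
  rw [Matrix.mulVec_mulVec,
    Matrix.mul_nonsing_inv _ ((Matrix.isUnit_iff_isUnit_det _).mp hA.isUnit),
    Matrix.one_mulVec]

lemma re_dot_flip (a b : Fin N → ℂ) : (star a ⬝ᵥ b).re = (star b ⬝ᵥ a).re := by
  rw [Matrix.star_dotProduct]
  simp

lemma q_eq {T : Matrix (Fin N) (Fin N) ℂ} (hT : T.PosSemidef) {δ : ℝ} (hδ : 0 < δ)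
    (y : Fin N → ℂ) :
    (star y ⬝ᵥ ((T + δ • (1 : Matrix (Fin N) (Fin N) ℂ))⁻¹ *ᵥ y)).re =
      (star ((T + δ • (1 : Matrix (Fin N) (Fin N) ℂ))⁻¹ *ᵥ y) ⬝ᵥ
        ((T + δ • (1 : Matrix (Fin N) (Fin N) ℂ)) *ᵥ
          ((T + δ • (1 : Matrix (Fin N) (Fin N) ℂ))⁻¹ *ᵥ y))).re := by
  rw [A_mulVec_inv hT hδ y, re_dot_flip]

lemma q_nonneg {T : Matrix (Fin N) (Fin N) ℂ} (hT : T.PosSemidef) {δ : ℝ} (hδ : 0 < δ)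
    (y : Fin N → ℂ) :
    0 ≤ (star y ⬝ᵥ ((T + δ • (1 : Matrix (Fin N) (Fin N) ℂ))⁻¹ *ᵥ y)).re := by
  rw [q_eq hT hδ y]
  exact re_nonneg_of_psd (posDef_reg hT hδ).posSemidef _

/-- Key bound: the regularized quadratic form of `y = T x` is bounded by `xᴴ T x`. -/
lemma q_le {T : Matrix (Fin N) (Fin N) ℂ} (hT : T.PosSemidef) {δ : ℝ} (hδ : 0 < δ)
    (x y : Fin N → ℂ) (hxy : T *ᵥ x = y) :
    (star y ⬝ᵥ ((T + δ • (1 : Matrix (Fin N) (Fin N) ℂ))⁻¹ *ᵥ y)).re ≤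
      (star x ⬝ᵥ (T *ᵥ x)).re := by
  set A := T + δ • (1 : Matrix (Fin N) (Fin N) ℂ) with hAdef
  have hA := posDef_reg hT hδ
  set s := A⁻¹ *ᵥ y with hs
  have hAs : A *ᵥ s = y := A_mulVec_inv hT hδ y
  set m := (star x ⬝ᵥ (T *ᵥ x)).re with hm
  have hm0 : 0 ≤ m := re_nonneg_of_psd hT x
  set q := (star y ⬝ᵥ (A⁻¹ *ᵥ y)).re with hqdef
  have hq0 : 0 ≤ q := q_nonneg hT hδ y
  have hq1 : q = (star s ⬝ᵥ (A *ᵥ s)).re := q_eq hT hδ y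
  have hq2 : q = (star s ⬝ᵥ (T *ᵥ x)).re := by rw [hq1, hAs, ← hxy]
  have hsT : (star s ⬝ᵥ (T *ᵥ s)).re ≤ q := by
    rw [hq1, hAdef, Matrix.add_mulVec, dotProduct_add, smul_one_mulVec]
    have h2 : star s ⬝ᵥ ((δ : ℂ) • s) = (δ : ℂ) * (star s ⬝ᵥ s) := by
      rw [dotProduct_smul]; rfl
    have h3 : 0 ≤ (star s ⬝ᵥ ((δ : ℂ) • s)).re := by
      rw [h2, Complex.re_ofReal_mul]
      have := (Complex.le_def.mp (dotProduct_star_self_nonneg s)).1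
      simp only [Complex.zero_re] at this
      positivity
    rw [Complex.add_re]
    linarith
  have cs := psd_cs hT s x
  have habs : q ^ 2 ≤ ‖star s ⬝ᵥ (T *ᵥ x)‖ ^ 2 := by
    rw [hq2]
    have h1 : |(star s ⬝ᵥ (T *ᵥ x)).re| ≤ ‖star s ⬝ᵥ (T *ᵥ x)‖ := by
      exact Complex.abs_re_le_norm _
    calc (star s ⬝ᵥ (T *ᵥ x)).re ^ 2 = |(star s ⬝ᵥ (T *ᵥ x)).re| ^ 2 := (sq_abs _).symm
      _ ≤ ‖star s ⬝ᵥ (T *ᵥ x)‖ ^ 2 := by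
          exact pow_le_pow_left₀ (abs_nonneg _) h1 2
  have hqm : q ^ 2 ≤ q * m := by
    calc q ^ 2 ≤ ‖star s ⬝ᵥ (T *ᵥ x)‖ ^ 2 := habs
      _ ≤ (star s ⬝ᵥ (T *ᵥ s)).re * m := cs
      _ ≤ q * m := mul_le_mul_of_nonneg_right hsT hm0
  rcases eq_or_lt_of_le hq0 with h | h
  · linarith
  · nlinarith

/-- Trace of `Yᴴ A Y` as a sum of quadratic forms of the columns. -/
lemma trace_form {L : ℕ} (A : Matrix (Fin N) (Fin N) ℂ) (Y : Matrix (Fin N) (Fin L) ℂ) :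
    (Yᴴ * A * Y).trace = ∑ l : Fin L, star (fun i => Y i l) ⬝ᵥ (A *ᵥ (fun i => Y i l)) := by
  classical
  rw [Matrix.trace]
  refine Finset.sum_congr rfl fun l _ => ?_
  simp only [Matrix.diag, Matrix.mul_apply, Matrix.conjTranspose_apply, Matrix.mulVec,
    dotProduct, Pi.star_apply, Finset.sum_mul, Finset.mul_sum]
  rw [Finset.sum_comm]
  refine Finset.sum_congr rfl fun i _ => Finset.sum_congr rfl fun j _ => ?_
  ring

/-- Range criterion via orthogonality to the kernel of the adjoint. -/
lemma mem_range_of_orth (M : Matrix (Fin N) (Fin N) ℂ) (y : Fin N → ℂ)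
    (h : ∀ v : Fin N → ℂ, Mᴴ *ᵥ v = 0 → star v ⬝ᵥ y = 0) :
    ∃ x : Fin N → ℂ, M *ᵥ x = y := by
  classical
  set f := Matrix.toEuclideanLin M with hf
  set R : Submodule ℂ (EuclideanSpace ℂ (Fin N)) := LinearMap.range f with hR
  have hy : (WithLp.equiv 2 (Fin N → ℂ)).symm y ∈ Rᗮᗮ := by
    rw [Submodule.mem_orthogonal]
    intro v hv
    have hMv : Mᴴ *ᵥ (WithLp.equiv 2 (Fin N → ℂ)) v = 0 := by
      have hz : ∀ x : Fin N → ℂ, star x ⬝ᵥ (Mᴴ *ᵥ (WithLp.equiv 2 (Fin N → ℂ)) v) = 0 := by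
        intro x
        have hmem : f ((WithLp.equiv 2 (Fin N → ℂ)).symm x) ∈ R :=
          LinearMap.mem_range_self _ _
        have h5 := (Submodule.mem_orthogonal R v).mp hv _ hmem
        rw [hf, WithLp.equiv_symm_apply, Matrix.toEuclideanLin_apply_piLp_toLp,
          EuclideanSpace.inner_eq_star_dotProduct] at h5
        simp only [Equiv.apply_symm_apply] at h5
        rw [Matrix.star_mulVec] at h5
        rw [Matrix.dotProduct_mulVec]
        rw [dotProduct_comm]; exact h5
      have := hz (Mᴴ *ᵥ (WithLp.equiv 2 (Fin N → ℂ)) v)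
      exact dotProduct_star_self_eq_zero.mp this
    have := h _ hMv
    rw [Submodule.mem_orthogonal'] at hv
    rw [EuclideanSpace.inner_eq_star_dotProduct]
    simpa [dotProduct_comm] using this
  rw [Submodule.orthogonal_orthogonal] at hy
  obtain ⟨x, hx⟩ := hy
  refine ⟨(WithLp.equiv 2 (Fin N → ℂ)) x, ?_⟩
  have := congrArg (WithLp.equiv 2 (Fin N → ℂ)) hx
  rw [hf, WithLp.equiv_apply, Matrix.ofLp_toEuclideanLin_apply] at this
  simpa using this

/-- Continuity of the entries of the Toeplitz matrix. -/
lemma toep_entry_continuous (i j : Fin N) :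
    Continuous fun w : Fin N → ℂ => Toep N w i j := by
  unfold Toep
  simp only [Matrix.of_apply]
  by_cases h : (i : ℕ) ≤ (j : ℕ)
  · simp only [if_pos h]
    exact continuous_apply _
  · simp only [if_neg h]
    exact RCLike.continuous_conj.comp (continuous_apply _)

end Aux

theorem range_closure_at_cluster_point (N L : ℕ)
    (u : ℝ → (Fin N → ℂ)) (u₀ : Fin N → ℂ)
    (hpsd : ∀ ε : ℝ, 0 < ε → (Toep N (u ε)).PosSemidef)
    (hbdd : ∃ B : ℝ, ∀ ε : ℝ, 0 < ε → ∀ j, ‖u ε j‖ ≤ B)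
    (hcluster : MapClusterPt u₀ (nhdsWithin 0 (Set.Ioi 0)) u)
    (Y : Matrix (Fin N) (Fin L) ℂ)
    (hrange : ∀ ε : ℝ, 0 < ε → ∀ l : Fin L,
      ∃ x : Fin N → ℂ, Toep N (u ε) *ᵥ x = fun i => Y i l)
    (hq : ∃ C : ℝ, ∀ ε : ℝ, 0 < ε → qtrace N L (Toep N (u ε)) Y ≤ C) :
    ∀ l : Fin L, ∃ x : Fin N → ℂ, Toep N u₀ *ᵥ x = fun i => Y i l := by
  classical
  intro l
  obtain ⟨C, hC⟩ := hq
  set y : Fin N → ℂ := fun i => Y i l with hy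
  apply mem_range_of_orth
  intro v hv
  set F := comap u (𝓝 u₀) ⊓ 𝓝[>] (0 : ℝ) with hF
  have hFne : F.NeBot := by
    rw [hF, ← Filter.map_neBot_iff u, Filter.push_pull']
    exact hcluster
  have htu : Tendsto u F (𝓝 u₀) := tendsto_iff_comap.mpr inf_le_left
  have hεpos : ∀ᶠ ε in F, 0 < ε :=
    (eventually_mem_nhdsWithin.filter_mono inf_le_right).mono fun x hx => hx
  set K := (star v ⬝ᵥ v).re with hK
  have main : ∀ δ : ℝ, 0 < δ → ‖star v ⬝ᵥ y‖ ^ 2 ≤ δ * K * C := by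
    intro δ hδ
    have hev : ∀ᶠ ε in F, ‖star v ⬝ᵥ y‖ ^ 2 ≤
        (star v ⬝ᵥ ((Toep N (u ε) + δ • (1 : Matrix (Fin N) (Fin N) ℂ)) *ᵥ v)).re * C := by
      filter_upwards [hεpos] with ε hε
      set T := Toep N (u ε) with hT'
      have hT := hpsd ε hε
      have hA := posDef_reg hT hδ
      set A := T + δ • (1 : Matrix (Fin N) (Fin N) ℂ) with hAdef
      set s := A⁻¹ *ᵥ y with hs
      have hAs : A *ᵥ s = y := A_mulVec_inv hT hδ y
      choose x hx using hrange ε hε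
      set q := (star y ⬝ᵥ (A⁻¹ *ᵥ y)).re with hqdef
      have hqC : q ≤ C := by
        set S := { t : ℝ | ∃ δ' : ℝ, 0 < δ' ∧
          t = (Yᴴ * (T + δ' • (1 : Matrix (Fin N) (Fin N) ℂ))⁻¹ * Y).trace.re } with hS
        have hSsup : qtrace N L T Y = sSup S := rfl
        have hbdd : BddAbove S := by
          refine ⟨∑ l' : Fin L, (star (x l') ⬝ᵥ (T *ᵥ (x l'))).re, ?_⟩
          rintro t ⟨δ', hδ', rfl⟩
          rw [trace_form, Complex.re_sum]
          exact Finset.sum_le_sum fun l' _ => q_le hT hδ' (x l') _ (hx l')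
        have hmem : (Yᴴ * (T + δ • (1 : Matrix (Fin N) (Fin N) ℂ))⁻¹ * Y).trace.re ∈ S :=
          ⟨δ, hδ, rfl⟩
        have h1 : q ≤ (Yᴴ * A⁻¹ * Y).trace.re := by
          rw [trace_form, Complex.re_sum]
          exact Finset.single_le_sum
            (f := fun l' => (star (fun i => Y i l') ⬝ᵥ (A⁻¹ *ᵥ fun i => Y i l')).re)
            (fun l' _ => q_nonneg hT hδ _) (Finset.mem_univ l)
        calc q ≤ (Yᴴ * A⁻¹ * Y).trace.re := h1
          _ ≤ sSup S := le_csSup hbdd hmem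
          _ = qtrace N L T Y := hSsup.symm
          _ ≤ C := hC ε hε
      have hq0 : 0 ≤ q := q_nonneg hT hδ y
      have hvyA : star v ⬝ᵥ y = star v ⬝ᵥ (A *ᵥ s) := by rw [hAs]
      have cs := psd_cs hA.posSemidef v s
      have hsq : (star s ⬝ᵥ (A *ᵥ s)).re = q := (q_eq hT hδ y).symm
      calc ‖star v ⬝ᵥ y‖ ^ 2 = ‖star v ⬝ᵥ (A *ᵥ s)‖ ^ 2 := by rw [hvyA]
        _ ≤ (star v ⬝ᵥ (A *ᵥ v)).re * q := by rw [← hsq]; exact cs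
        _ ≤ (star v ⬝ᵥ (A *ᵥ v)).re * C :=
            mul_le_mul_of_nonneg_left hqC (re_nonneg_of_psd hA.posSemidef v)
    have hcont : Continuous fun w : Fin N → ℂ =>
        (star v ⬝ᵥ ((Toep N w + δ • (1 : Matrix (Fin N) (Fin N) ℂ)) *ᵥ v)).re := by
      apply Complex.continuous_re.comp
      simp only [dotProduct, Matrix.mulVec, Matrix.add_apply, Pi.star_apply]
      apply continuous_finset_sum
      intro i _
      apply Continuous.mul continuous_const
      apply continuous_finset_sum
      intro j _
      exact (((toep_entry_continuous i j).add continuous_const).mul continuous_const)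
    have hlim : Tendsto
        (fun ε => (star v ⬝ᵥ ((Toep N (u ε) + δ • (1 : Matrix (Fin N) (Fin N) ℂ)) *ᵥ v)).re * C)
        F (𝓝 ((star v ⬝ᵥ ((Toep N u₀ + δ • (1 : Matrix (Fin N) (Fin N) ℂ)) *ᵥ v)).re * C)) :=
      ((hcont.tendsto u₀).comp htu).mul_const C
    have hval : (star v ⬝ᵥ ((Toep N u₀ + δ • (1 : Matrix (Fin N) (Fin N) ℂ)) *ᵥ v)).re =
        δ * K := by
      rw [Matrix.add_mulVec, dotProduct_add, smul_one_mulVec]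
      have h1 : star v ⬝ᵥ (Toep N u₀ *ᵥ v) = 0 := by
        have h2 : star v ᵥ* Toep N u₀ = star ((Toep N u₀)ᴴ *ᵥ v) := by
          rw [Matrix.star_mulVec, Matrix.conjTranspose_conjTranspose]
        rw [Matrix.dotProduct_mulVec, h2, hv]
        simp
      have h3 : star v ⬝ᵥ ((δ : ℂ) • v) = (δ : ℂ) * (star v ⬝ᵥ v) := by
        rw [dotProduct_smul]; rfl
      rw [h1, h3, Complex.add_re, Complex.re_ofReal_mul]
      simp [hK]
    have := ge_of_tendsto hlim hev
    rw [hval] at this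
    exact this
  have hK0 : 0 ≤ K := by
    have := (Complex.le_def.mp (dotProduct_star_self_nonneg v)).1
    simpa [hK] using this
  have h0 : Tendsto (fun δ : ℝ => δ * K * C) (𝓝[>] (0 : ℝ)) (𝓝 0) := by
    have hcont : Tendsto (fun δ : ℝ => δ * K * C) (𝓝 (0 : ℝ)) (𝓝 (0 * K * C)) :=
      ((continuous_id.mul continuous_const).mul continuous_const).tendsto 0
    simpa using hcont.mono_left nhdsWithin_le_nhds
  have hP : ‖star v ⬝ᵥ y‖ ^ 2 ≤ 0 :=
    ge_of_tendsto h0 (eventually_mem_nhdsWithin.mono fun δ hδ => main δ hδ)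
  have hnorm : ‖star v ⬝ᵥ y‖ = 0 := by
    nlinarith [norm_nonneg (star v ⬝ᵥ y), sq_nonneg ‖star v ⬝ᵥ y‖]
  exact norm_eq_zero.mp hnorm
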